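/- Let R be a finite commutative chain ring with maximal ideal ⟨γ⟩, nilpotency index s, and residue field of size q. Let C ⊆ R^n be a linear code which is non-degenerate, i.e., for every coordinate i ∈ {1,…,n} there exists c ∈ C with c_i ≠ 0. Then the average homogeneous weight of C equals n: (1/|C|)·Σ_{c ∈ C} wt_Hom(c) = n. -/

import Mathlib

open scoped BigOperators Classical

/-- The normalized homogeneous weight on a finite chain ring with maximal ideal `⟨γ⟩`,
nilpotency index `s` and residue field of size `q`. -/
noncomputable def wtHom {R : Type*} [CommRing R] (γ : R) (s q : ℕ) (x : R) : ℚ :=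
  if x = 0 then 0
  else if x ∈ Ideal.span {γ ^ (s - 1)} then (q : ℚ) / ((q : ℚ) - 1)
  else 1

/-- Homogeneous weight of a vector: the sum of the weights of its coordinates. -/
noncomputable def wtHomV {R : Type*} [CommRing R] (γ : R) (s q : ℕ) {n : ℕ}
    (v : Fin n → R) : ℚ :=
  ∑ i, wtHom γ s q (v i)

/-- Hamming weight of a vector: the number of nonzero coordinates. -/
noncomputable def hWt {R : Type*} [Zero R] {n : ℕ} (v : Fin n → R) : ℕ :=
  Nat.card {i : Fin n // v i ≠ 0}

/-- `K` is the rank of the code `C`: the least cardinality of a generating set of `C`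
as an `R`-module. -/
def IsCodeRank {R : Type*} [CommRing R] {n : ℕ} (C : Submodule R (Fin n → R)) (K : ℕ) : Prop :=
  IsLeast {k : ℕ | ∃ S : Finset (Fin n → R),
    S.card = k ∧ Submodule.span R (S : Set (Fin n → R)) = C} K

/-- The socle of a code: the codewords all of whose coordinates lie in `⟨γ^(s-1)⟩`. -/
def socleCode {R : Type*} [CommRing R] (γ : R) (s : ℕ) {n : ℕ}
    (C : Submodule R (Fin n → R)) : Submodule R (Fin n → R) :=
  C ⊓ Submodule.pi Set.univ (fun _ : Fin n => Ideal.span {γ ^ (s - 1)})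

section auxAvg
variable {R : Type*} [CommRing R]

variable {R : Type*} [CommRing R]

/-- A nonzero ideal of the chain ring contains the socle `⟨γ^(s-1)⟩`. -/
lemma aux_span_le [IsLocalRing R] (γ : R) (s : ℕ) (hs : 1 ≤ s)
    (hmax : IsLocalRing.maximalIdeal R = Ideal.span {γ})
    (hnil : γ ^ s = 0) (I : Ideal R) {x : R} (hxI : x ∈ I) (hx0 : x ≠ 0) :
    Ideal.span {γ ^ (s - 1)} ≤ I := by
  have hQ : ∃ j, x ∉ Ideal.span {γ ^ (j + 1)} := by
    refine ⟨s - 1, ?_⟩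
    rw [Nat.sub_add_cancel hs, hnil]
    simp only [Ideal.span_singleton_eq_bot.mpr rfl, Ideal.mem_bot]
    exact hx0
  let j := Nat.find hQ
  have hj1 : x ∉ Ideal.span {γ ^ (j + 1)} := Nat.find_spec hQ
  have hj2 : x ∈ Ideal.span {γ ^ j} := by
    rcases Nat.eq_zero_or_pos j with h0 | hpos
    · rw [h0, pow_zero, Ideal.span_singleton_one]; trivial
    · have := Nat.find_min hQ (m := j - 1) (by omega)
      push_neg at this
      rwa [Nat.sub_add_cancel hpos] at this
  have hjs : j ≤ s - 1 := by
    by_contra h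
    have hjge : s ≤ j := by omega
    have : γ ^ j = 0 := by
      calc γ ^ j = γ ^ s * γ ^ (j - s) := by rw [← pow_add, Nat.add_sub_cancel' hjge]
      _ = 0 := by rw [hnil, zero_mul]
    rw [this] at hj2
    simp only [Ideal.span_singleton_eq_bot.mpr rfl, Ideal.mem_bot] at hj2
    exact hx0 hj2
  obtain ⟨a, ha⟩ := Ideal.mem_span_singleton'.mp hj2
  have haunit : IsUnit a := by
    by_contra hna
    have : a ∈ IsLocalRing.maximalIdeal R := hna
    rw [hmax, Ideal.mem_span_singleton'] at this
    obtain ⟨b, hb⟩ := this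
    apply hj1
    rw [Ideal.mem_span_singleton', ← ha, ← hb]
    exact ⟨b, by ring⟩
  obtain ⟨u, hu⟩ := haunit
  rw [Ideal.span_le, Set.singleton_subset_iff]
  have key : γ ^ (s - 1) = ↑u⁻¹ * γ ^ (s - 1 - j) * x := by
    rw [← ha, ← hu]
    have : (↑u⁻¹ * γ ^ (s - 1 - j)) * (↑u * γ ^ j) = (↑u⁻¹ * ↑u) * (γ ^ (s - 1 - j) * γ ^ j) := by
      ring
    rw [this, Units.inv_mul, one_mul, ← pow_add, Nat.sub_add_cancel hjs]
  rw [key]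
  exact Ideal.mul_mem_left _ _ hxI


variable {R : Type*} [CommRing R]

/-- The socle `⟨γ^(s-1)⟩` has exactly `q` elements. -/
lemma aux_card_socle [IsLocalRing R] (γ : R) (s q : ℕ) (hs : 1 ≤ s)
    (hmax : IsLocalRing.maximalIdeal R = Ideal.span {γ})
    (hnil : γ ^ s = 0) (hnil' : γ ^ (s - 1) ≠ 0)
    (hq : Nat.card (R ⧸ IsLocalRing.maximalIdeal R) = q) :
    Nat.card (Ideal.span {γ ^ (s - 1)} : Ideal R) = q := by
  set f : R →ₗ[R] R := LinearMap.toSpanSingleton R R (γ ^ (s - 1)) with hf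
  have hrange : LinearMap.range f = Ideal.span {γ ^ (s - 1)} := by
    rw [← Ideal.submodule_span_eq, ← LinearMap.span_singleton_eq_range]
  have hker : LinearMap.ker f = IsLocalRing.maximalIdeal R := by
    ext r
    simp only [LinearMap.mem_ker, hf, LinearMap.toSpanSingleton_apply, smul_eq_mul]
    constructor
    · intro h
      by_contra hr
      have : IsUnit r := not_not.mp hr
      obtain ⟨u, hu⟩ := this
      apply hnil'
      calc γ ^ (s - 1) = ↑u⁻¹ * (r * γ ^ (s - 1)) := by
            rw [← hu, ← mul_assoc, Units.inv_mul, one_mul]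
      _ = 0 := by rw [h, mul_zero]
    · intro h
      rw [hmax, Ideal.mem_span_singleton'] at h
      obtain ⟨b, hb⟩ := h
      rw [← hb]
      calc b * γ * γ ^ (s - 1) = b * γ ^ (s - 1 + 1) := by rw [mul_assoc, ← pow_succ']
      _ = 0 := by rw [Nat.sub_add_cancel hs, hnil, mul_zero]
  have e := f.quotKerEquivRange
  rw [hker] at e
  rw [← hrange, ← Nat.card_congr e.toEquiv, hq]


variable {R : Type*} [CommRing R]

/-- On any ideal containing the socle, the weights sum to the cardinality of the ideal. -/
lemma aux_sum_wtHom [Fintype R] (γ : R) (s q : ℕ) (hq2 : 2 ≤ q)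
    (hcard : Nat.card (Ideal.span {γ ^ (s - 1)} : Ideal R) = q)
    (I : Ideal R) [Fintype I] (hI : Ideal.span {γ ^ (s - 1)} ≤ I) :
    ∑ x : I, wtHom γ s q (x : R) = Nat.card I := by
  set S : Ideal R := Ideal.span {γ ^ (s - 1)} with hS
  have key : ∀ x : I, wtHom γ s q (x : R) =
      (if (x : R) ∈ S ∧ (x : R) ≠ 0 then (q : ℚ) / ((q : ℚ) - 1) else 0)
      + (if (x : R) ∈ S then 0 else 1) := by
    intro x
    unfold wtHom
    by_cases h0 : (x : R) = 0
    · simp [h0, hS, S.zero_mem]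
    · by_cases hm : (x : R) ∈ S <;> simp [h0, hm, ← hS]
  rw [Finset.sum_congr rfl (fun x _ => key x), Finset.sum_add_distrib]
  have cA : (Finset.univ.filter fun x : I => (x : R) ∈ S).card = q := by
    rw [← Fintype.card_subtype]
    rw [← Nat.card_eq_fintype_card, ← hcard]
    exact Nat.card_congr
      ⟨fun x => ⟨(x.1 : R), x.2⟩, fun y => ⟨⟨y.1, hI y.2⟩, y.2⟩,
        fun x => by ext; rfl, fun y => by ext; rfl⟩
  have hzero_mem : (0 : I) ∈ Finset.univ.filter fun x : I => (x : R) ∈ S := by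
    simp [S.zero_mem]
  have cB : (Finset.univ.filter fun x : I => (x : R) ∈ S ∧ (x : R) ≠ 0).card = q - 1 := by
    have : (Finset.univ.filter fun x : I => (x : R) ∈ S ∧ (x : R) ≠ 0)
        = (Finset.univ.filter fun x : I => (x : R) ∈ S).erase 0 := by
      ext x
      simp only [Finset.mem_filter, Finset.mem_erase, Finset.mem_univ, true_and]
      constructor
      · rintro ⟨h1, h2⟩
        exact ⟨fun h => h2 (by rw [h]; rfl), h1⟩
      · rintro ⟨h1, h2⟩
        refine ⟨h2, fun h => h1 ?_⟩
        exact Subtype.ext h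
    rw [this, Finset.card_erase_of_mem hzero_mem, cA]
  have cC : (Finset.univ.filter fun x : I => ¬ ((x : R) ∈ S)).card
      = Fintype.card I - q := by
    rw [Finset.filter_not, Finset.card_sdiff, Finset.inter_univ, cA,
      Finset.card_univ]
  have hle : q ≤ Fintype.card I := by
    rw [← cA]; exact Finset.card_le_card (Finset.filter_subset _ _) |>.trans
      (le_of_eq Finset.card_univ)
  rw [Finset.sum_ite, Finset.sum_const, Finset.sum_const_zero, add_zero,
    Finset.sum_ite, Finset.sum_const_zero, Finset.sum_const, zero_add,
    cB, cC, Nat.card_eq_fintype_card]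
  have h2 : (2:ℚ) ≤ (q:ℚ) := by exact_mod_cast hq2
  have hq1 : ((q:ℚ) - 1) ≠ 0 := by intro h; linarith
  rw [nsmul_eq_mul, nsmul_eq_mul, mul_one,
    Nat.cast_sub (by omega : 1 ≤ q), Nat.cast_sub hle]
  push_cast
  field_simp
  ring


variable {M : Type*} [AddCommGroup M] [Module R M]

variable {R : Type*} [CommRing R] {M : Type*} [AddCommGroup M] [Module R M]

/-- Each fiber of a linear map is in bijection with the kernel. -/
lemma aux_fiber_card [Fintype M] (f : M →ₗ[R] R) (y : LinearMap.range f) :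
    (Finset.univ.filter fun c : M => f.rangeRestrict c = y).card
      = Nat.card (LinearMap.ker f) := by
  obtain ⟨c₀, hc₀⟩ := f.surjective_rangeRestrict y
  rw [← Fintype.card_subtype, ← Nat.card_eq_fintype_card]
  refine Nat.card_congr ⟨fun c => ⟨c.1 - c₀, ?_⟩, fun k => ⟨k.1 + c₀, ?_⟩, ?_, ?_⟩
  · have h1 : f c.1 = (y : R) := congrArg Subtype.val c.2
    have h2 : f c₀ = (y : R) := congrArg Subtype.val hc₀
    simp [LinearMap.mem_ker, map_sub, h1, h2]
  · have hk : f k.1 = 0 := k.2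
    have h2 : f c₀ = (y : R) := by rw [← hc₀]; rfl
    ext
    simp [map_add, hk, h2]
  · intro c; ext; simp
  · intro k; ext; simp

/-- Sum of `g ∘ f` over a finite module. -/
lemma aux_sum_comp [Fintype M] (f : M →ₗ[R] R) [Fintype (LinearMap.range f)] (g : R → ℚ) :
    ∑ c : M, g (f c) = (Nat.card (LinearMap.ker f) : ℚ) * ∑ y : LinearMap.range f, g y := by
  have : ∀ c : M, g (f c) = g (f.rangeRestrict c : R) := fun c => rfl
  simp_rw [this]
  rw [← Finset.sum_fiberwise' Finset.univ f.rangeRestrict (fun y : LinearMap.range f => g y)]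
  · rw [Finset.mul_sum]
    refine Finset.sum_congr rfl fun y _ => ?_
    rw [Finset.sum_const, aux_fiber_card, nsmul_eq_mul]

/-- Cardinality splits along a linear map. -/
lemma aux_card_split [Fintype M] (f : M →ₗ[R] R) :
    Nat.card M = Nat.card (LinearMap.ker f) * Nat.card (LinearMap.range f) := by
  have h1 : Nat.card M
      = Nat.card (M ⧸ LinearMap.ker f) * Nat.card (LinearMap.ker f) := by
    exact (AddSubgroup.card_eq_card_quotient_mul_card_addSubgroup
      (LinearMap.ker f).toAddSubgroup)
  have h2 : Nat.card (M ⧸ LinearMap.ker f) = Nat.card (LinearMap.range f) :=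
    Nat.card_congr f.quotKerEquivRange.toEquiv
  rw [h1, h2, mul_comm]


end auxAvg

/-- The average homogeneous weight of a non-degenerate linear code in `R^n` equals `n`. -/

theorem avg_wtHom_code {R : Type*} [CommRing R] [IsLocalRing R] [Fintype R]
    (γ : R) (s q : ℕ) (hs : 1 ≤ s)
    (hmax : IsLocalRing.maximalIdeal R = Ideal.span {γ})
    (hnil : γ ^ s = 0) (hnil' : γ ^ (s - 1) ≠ 0)
    (hq : Nat.card (R ⧸ IsLocalRing.maximalIdeal R) = q)
    {n : ℕ} (C : Submodule R (Fin n → R))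
    (hnd : ∀ i : Fin n, ∃ c ∈ C, c i ≠ 0) :
    (Nat.card C : ℚ)⁻¹ * ∑ᶠ c ∈ (C : Set (Fin n → R)), wtHomV γ s q c = n := by
  haveI : Fintype C := Fintype.ofFinite _
  have hq2 : 2 ≤ q := by
    haveI : Finite (R ⧸ IsLocalRing.maximalIdeal R) := Quotient.finite _
    haveI ht : Nontrivial (R ⧸ IsLocalRing.maximalIdeal R) :=
      inferInstance
    have := Finite.one_lt_card (α := R ⧸ IsLocalRing.maximalIdeal R)
    omega
  have hcardS := aux_card_socle γ s q hs hmax hnil hnil' hq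
  have hcol : ∀ i : Fin n, ∑ c : C, wtHom γ s q ((c : Fin n → R) i)
      = (Nat.card C : ℚ) := by
    intro i
    set f : C →ₗ[R] R := (LinearMap.proj i).comp C.subtype with hf
    have happ : ∀ c : C, f c = (c : Fin n → R) i := fun c => rfl
    obtain ⟨c, hcC, hci⟩ := hnd i
    have hmem : c i ∈ LinearMap.range f := ⟨⟨c, hcC⟩, rfl⟩
    have hIle : Ideal.span {γ ^ (s - 1)} ≤ LinearMap.range f :=
      aux_span_le γ s hs hmax hnil (LinearMap.range f) hmem hci
    have hsum := aux_sum_wtHom γ s q hq2 hcardS (LinearMap.range f) hIle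
    calc ∑ c : C, wtHom γ s q ((c : Fin n → R) i)
        = ∑ c : C, wtHom γ s q (f c) := by simp_rw [happ]
      _ = (Nat.card (LinearMap.ker f) : ℚ) * ∑ y : LinearMap.range f, wtHom γ s q y :=
          aux_sum_comp f _
      _ = (Nat.card (LinearMap.ker f) : ℚ) * (Nat.card (LinearMap.range f) : ℚ) := by
          rw [hsum]
      _ = (Nat.card C : ℚ) := by
          rw [← Nat.cast_mul, ← aux_card_split f]
  have hC : (C : Set (Fin n → R)).Finite := Set.toFinite _
  have htot : ∑ᶠ c ∈ (C : Set (Fin n → R)), wtHomV γ s q c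
      = (n : ℚ) * (Nat.card C : ℚ) := by
    rw [finsum_mem_eq_finite_toFinset_sum _ hC,
      Finset.sum_subtype (p := fun x => x ∈ C) hC.toFinset
        (fun x => hC.mem_toFinset) (wtHomV γ s q)]
    unfold wtHomV
    calc ∑ c : C, ∑ i, wtHom γ s q ((c : Fin n → R) i)
        = ∑ i, ∑ c : C, wtHom γ s q ((c : Fin n → R) i) := Finset.sum_comm
      _ = ∑ _i : Fin n, (Nat.card C : ℚ) :=
          Finset.sum_congr rfl fun i _ => hcol i
      _ = (n : ℚ) * (Nat.card C : ℚ) := by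
          rw [Finset.sum_const, Finset.card_univ, Fintype.card_fin, nsmul_eq_mul]
  have hCpos : (0 : ℚ) < (Nat.card C : ℚ) := by
    have : 0 < Nat.card C := Nat.card_pos
    exact_mod_cast this
  rw [htot]
  field_simp
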